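/- If G is a connected graph, x ∈ V(G), and G−x is connected, then μ(G−x) ≤ 2·μ(G), where μ is the mutual-visibility number. -/

import Mathlib

open SimpleGraph

/-- `u` and `v` are `X`-visible in `G`: there is a shortest `u,v`-walk whose
vertices meet `X` only possibly in `u` and `v`. -/
def IsMVisible {V : Type*} (G : SimpleGraph V) (X : Set V) (u v : V) : Prop :=
  ∃ P : G.Walk u v, P.length = G.dist u v ∧
    ∀ w ∈ P.support, w ∈ X → w = u ∨ w = v

/-- mutual-visibility set -/
def IsMVSet {V : Type*} (G : SimpleGraph V) (X : Set V) : Prop :=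
  ∀ u ∈ X, ∀ v ∈ X, IsMVisible G X u v

/-- outer mutual-visibility set -/
def IsOuterMVSet {V : Type*} (G : SimpleGraph V) (X : Set V) : Prop :=
  ∀ u ∈ X, ∀ v : V, IsMVisible G X u v

/-- dual mutual-visibility set -/
def IsDualMVSet {V : Type*} (G : SimpleGraph V) (X : Set V) : Prop :=
  (∀ u ∈ X, ∀ v ∈ X, IsMVisible G X u v) ∧
  (∀ u ∉ X, ∀ v ∉ X, IsMVisible G X u v)

/-- total mutual-visibility set -/
def IsTotalMVSet {V : Type*} (G : SimpleGraph V) (X : Set V) : Prop :=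
  ∀ u v : V, IsMVisible G X u v

/-- the mutual-visibility number μ(G) -/
noncomputable def mu {V : Type*} (G : SimpleGraph V) : ℕ :=
  sSup {n | ∃ X : Set V, IsMVSet G X ∧ X.ncard = n}

/-- the outer mutual-visibility number μₒ(G) -/
noncomputable def muO {V : Type*} (G : SimpleGraph V) : ℕ :=
  sSup {n | ∃ X : Set V, IsOuterMVSet G X ∧ X.ncard = n}

/-- the dual mutual-visibility number μ_d(G) -/
noncomputable def muD {V : Type*} (G : SimpleGraph V) : ℕ :=
  sSup {n | ∃ X : Set V, IsDualMVSet G X ∧ X.ncard = n}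

/-- the total mutual-visibility number μ_t(G) -/
noncomputable def muT {V : Type*} (G : SimpleGraph V) : ℕ :=
  sSup {n | ∃ X : Set V, IsTotalMVSet G X ∧ X.ncard = n}

section helpers

variable {V : Type*} {G : SimpleGraph V}

/-- The valuation homomorphism from an induced subgraph to the ambient graph. -/
def valHom (G : SimpleGraph V) (s : Set V) : G.induce s →g G :=
  ⟨Subtype.val, fun {a b} h => h⟩

lemma induce_dist_le {s : Set V} (hconn : (G.induce s).Connected) (a b : s) :
    G.dist a.1 b.1 ≤ (G.induce s).dist a b := by
  obtain ⟨p, hp⟩ := hconn.exists_walk_length_eq_dist a b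
  calc G.dist a.1 b.1 ≤ (p.map (valHom G s)).length := dist_le _
    _ = (G.induce s).dist a b := by rw [Walk.length_map, hp]

lemma exists_induce_walk_of_support {s : Set V} {a b : V} (q : G.Walk a b)
    (hs : ∀ w ∈ q.support, w ∈ s) (ha : a ∈ s) (hb : b ∈ s) :
    ∃ p : (G.induce s).Walk ⟨a, ha⟩ ⟨b, hb⟩, p.length = q.length := by
  induction q with
  | nil => exact ⟨Walk.nil, rfl⟩
  | @cons a c b hadj p ih =>
    have hc : c ∈ s := hs c (by simp)
    obtain ⟨p', hp'⟩ := ih (fun w hw => hs w (by simp [hw])) hc hb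
    exact ⟨Walk.cons (by exact hadj) p', by show p'.length + 1 = p.length + 1; rw [hp']⟩

lemma split_shortest [DecidableEq V] (hG : G.Connected) {a b c : V}
    (q : G.Walk a b) (hq : q.length = G.dist a b) (hc : c ∈ q.support) :
    (q.takeUntil c hc).length = G.dist a c ∧ (q.dropUntil c hc).length = G.dist c b ∧
      G.dist a c + G.dist c b = G.dist a b := by
  have h1 : (q.takeUntil c hc).length + (q.dropUntil c hc).length = q.length := by
    rw [← Walk.length_append, q.take_spec hc]
  have h2 := SimpleGraph.dist_le (q.takeUntil c hc)
  have h3 := SimpleGraph.dist_le (q.dropUntil c hc)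
  have h4 := hG.dist_triangle (u := a) (v := c) (w := b)
  omega

end helpers

theorem stmt_9 {V : Type*} [Fintype V] (G : SimpleGraph V) (hG : G.Connected)
    (x : V) (hconn : (G.induce {v | v ≠ x}).Connected) :
    mu (G.induce {v | v ≠ x}) ≤ 2 * mu G := by
  classical
  set s : Set V := {v | v ≠ x} with hs_def
  set H : SimpleGraph s := G.induce s with hH_def
  -- boundedness of the defining sets
  have hbddH : BddAbove {n | ∃ X : Set s, IsMVSet H X ∧ X.ncard = n} := by
    refine ⟨Nat.card s, ?_⟩
    rintro n ⟨X, -, rfl⟩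
    simpa only [Set.ncard_univ] using Set.ncard_le_ncard (Set.subset_univ X) Set.finite_univ
  have hbddG : BddAbove {n | ∃ Y : Set V, IsMVSet G Y ∧ Y.ncard = n} := by
    refine ⟨Nat.card V, ?_⟩
    rintro n ⟨Y, -, rfl⟩
    simpa only [Set.ncard_univ] using Set.ncard_le_ncard (Set.subset_univ Y) Set.finite_univ
  -- the supremum is attained
  have hmemH : mu H ∈ {n | ∃ X : Set s, IsMVSet H X ∧ X.ncard = n} := by
    apply Nat.sSup_mem _ hbddH
    exact ⟨0, ∅, fun u hu => absurd hu (Set.notMem_empty u), Set.ncard_empty _⟩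
  obtain ⟨X, hXmv, hXcard⟩ := hmemH
  set Xv : Set V := Subtype.val '' X with hXv_def
  set W : Set s := {u | u ∈ X ∧ ∃ q : G.Walk u.1 x, q.length = G.dist u.1 x ∧
      ∀ w ∈ q.support, w ∈ Xv → w = u.1} with hW_def
  -- distances in G are at most distances in H
  have hdGH : ∀ a b : s, G.dist a.1 b.1 ≤ H.dist a b := fun a b => induce_dist_le hconn a b
  -- witnesses for "good" pairs
  have hgoodPair : ∀ a b : s, a ∈ X → b ∈ X → G.dist a.1 b.1 = H.dist a b →
      ∃ q : G.Walk a.1 b.1, q.length = G.dist a.1 b.1 ∧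
        ∀ w ∈ q.support, w ∈ Xv → w = a.1 ∨ w = b.1 := by
    intro a b ha hb hd
    obtain ⟨P, hPlen, hPsup⟩ := hXmv a ha b hb
    refine ⟨P.map (valHom G s), ?_, ?_⟩
    · exact (Walk.length_map _ _).trans (hPlen.trans hd.symm)
    · intro w hw hwX
      replace hw : w ∈ P.support.map (valHom G s) :=
        Eq.mp (congrArg (w ∈ ·) (Walk.support_map (valHom G s) P)) hw
      obtain ⟨w', hw', rfl⟩ := List.mem_map.mp hw
      obtain ⟨w'', hw''X, hval⟩ := hwX
      have hww : w'' = w' := Subtype.val_injective hval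
      subst hww
      rcases hPsup w'' hw' hw''X with h | h
      · exact Or.inl (h ▸ rfl)
      · exact Or.inr (h ▸ rfl)
  -- "bad" pairs have all geodesics through x
  have hbadPair : ∀ a b : s, G.dist a.1 b.1 ≠ H.dist a b →
      G.dist a.1 x + G.dist x b.1 = G.dist a.1 b.1 := by
    intro a b hne
    obtain ⟨q, hq⟩ := hG.exists_walk_length_eq_dist a.1 b.1
    by_cases hx : x ∈ q.support
    · exact (split_shortest hG q hq hx).2.2
    · exfalso
      have hsup : ∀ w ∈ q.support, w ∈ s := fun w hw hwx => hx (hwx ▸ hw)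
      obtain ⟨p, hp⟩ := exists_induce_walk_of_support q hsup a.2 b.2
      have h1 : H.dist a b ≤ G.dist a.1 b.1 := by
        calc H.dist a b ≤ p.length := dist_le p
          _ = q.length := hp
          _ = G.dist a.1 b.1 := hq
      exact hne (le_antisymm (hdGH a b) h1)
  -- the key subclaim: every vertex of X reaches x by a geodesic whose internal
  -- X-vertices lie in W
  have hS : ∀ u : s, u ∈ X → ∃ q : G.Walk u.1 x, q.length = G.dist u.1 x ∧
      ∀ w ∈ q.support, w ∈ Xv → w = u.1 ∨ w ∈ Subtype.val '' W := by
    intro u huX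
    by_cases hz : ∃ z : s, z ∈ X ∧ z.1 ≠ u.1 ∧ ∃ q : G.Walk u.1 x,
        q.length = G.dist u.1 x ∧ z.1 ∈ q.support
    · set Zset : Set s := {z | z ∈ X ∧ z.1 ≠ u.1 ∧ ∃ q : G.Walk u.1 x,
          q.length = G.dist u.1 x ∧ z.1 ∈ q.support} with hZ_def
      obtain ⟨z₀, hz₀⟩ := hz
      have hNne : ((fun z : s => G.dist z.1 x) '' Zset).Nonempty := ⟨_, z₀, hz₀, rfl⟩
      obtain ⟨z, hzZ, hzval⟩ := Nat.sInf_mem hNne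
      have hmin : ∀ z' ∈ Zset, G.dist z.1 x ≤ G.dist z'.1 x := fun z' hz' => by
        have h1 : G.dist z.1 x = sInf ((fun z : s => G.dist z.1 x) '' Zset) := hzval
        rw [h1]; exact Nat.sInf_le ⟨z', hz', rfl⟩
      obtain ⟨hzX, hzne, q, hqlen, hzsup⟩ := hzZ
      have hsplit := split_shortest hG q hqlen hzsup
      set R := q.dropUntil z.1 hzsup with hR_def
      have hRlen : R.length = G.dist z.1 x := hsplit.2.1
      have hzx : z.1 ≠ x := z.2
      have hzr_pos : 0 < G.dist z.1 x := hG.pos_dist_of_ne hzx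
      have huz_pos : 0 < G.dist u.1 z.1 := hG.pos_dist_of_ne (Ne.symm hzne)
      have hsum : G.dist u.1 z.1 + G.dist z.1 x = G.dist u.1 x := hsplit.2.2
      have hzx_lt : G.dist z.1 x < G.dist u.1 x := by omega
      have hRclean : ∀ w ∈ R.support, w ∈ Xv → w = z.1 := by
        intro w hwR hwX
        by_contra hwne
        have hwq : w ∈ q.support := q.support_dropUntil_subset hzsup hwR
        have hsplit2 := (split_shortest hG R hRlen hwR).2.2
        have hzw_pos : 0 < G.dist z.1 w := hG.pos_dist_of_ne (fun h => hwne h.symm)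
        have hwx_lt : G.dist w x < G.dist z.1 x := by omega
        have hwu : w ≠ u.1 := by
          intro h
          rw [h] at hwx_lt
          omega
        obtain ⟨w', hw'X, rfl⟩ := hwX
        have hw'Z : w' ∈ Zset := ⟨hw'X, hwu, q, hqlen, hwq⟩
        have := hmin w' hw'Z
        omega
      have hzW : z ∈ W := ⟨hzX, R, hRlen, hRclean⟩
      have hduz : G.dist u.1 z.1 = H.dist u z := by
        by_contra hne
        have hbad := hbadPair u z hne
        have hc : G.dist x z.1 = G.dist z.1 x := dist_comm
        omega
      obtain ⟨P, hPlen, hPsup⟩ := hgoodPair u z huX hzX hduz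
      refine ⟨P.append R, ?_, ?_⟩
      · rw [Walk.length_append, hPlen, hRlen]; omega
      · intro w hw hwX
        rw [Walk.support_append, List.mem_append] at hw
        rcases hw with hw | hw
        · rcases hPsup w hw hwX with h | h
          · exact Or.inl h
          · exact Or.inr ⟨z, hzW, h.symm⟩
        · have hwR : w ∈ R.support := List.mem_of_mem_tail hw
          exact Or.inr ⟨z, hzW, (hRclean w hwR hwX).symm⟩
    · obtain ⟨q, hq⟩ := hG.exists_walk_length_eq_dist u.1 x
      refine ⟨q, hq, ?_⟩
      intro w hw hwX
      obtain ⟨w', hw'X, rfl⟩ := hwX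
      by_cases h : w'.1 = u.1
      · exact Or.inl h
      · exact absurd ⟨w', hw'X, h, q, hq, hw⟩ hz
  -- W (as a subset of V) is a mutual-visibility set of G
  have hWmv : IsMVSet G (Subtype.val '' W) := by
    rintro a ⟨u, huW, rfl⟩ b ⟨v, hvW, rfl⟩
    obtain ⟨huX, qu, hqu_len, hqu_sup⟩ := huW
    obtain ⟨hvX, qv, hqv_len, hqv_sup⟩ := hvW
    by_cases hd : G.dist u.1 v.1 = H.dist u v
    · obtain ⟨q, hqlen, hqsup⟩ := hgoodPair u v huX hvX hd
      exact ⟨q, hqlen, fun w hw hwW => hqsup w hw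
        (by obtain ⟨z2, hz2, rfl⟩ := hwW; exact ⟨z2, hz2.1, rfl⟩)⟩
    · have hsum := hbadPair u v hd
      refine ⟨qu.append qv.reverse, ?_, ?_⟩
      · have hc : G.dist x v.1 = G.dist v.1 x := dist_comm
        rw [Walk.length_append, Walk.length_reverse, hqu_len, hqv_len]
        omega
      · intro w hw hwW
        have hwX : w ∈ Xv := by obtain ⟨z2, hz2, rfl⟩ := hwW; exact ⟨z2, hz2.1, rfl⟩
        rw [Walk.support_append, List.mem_append] at hw
        rcases hw with hw | hw
        · exact Or.inl (hqu_sup w hw hwX)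
        · have h2 : w ∈ qv.support := by
            have := List.mem_of_mem_tail hw
            rwa [Walk.support_reverse, List.mem_reverse] at this
          exact Or.inr (hqv_sup w h2 hwX)
  -- X \ W (as a subset of V) is a mutual-visibility set of G
  have hDmv : IsMVSet G (Subtype.val '' (X \ W)) := by
    rintro a ⟨u, huD, rfl⟩ b ⟨v, hvD, rfl⟩
    have huX := huD.1
    have hvX := hvD.1
    by_cases hd : G.dist u.1 v.1 = H.dist u v
    · obtain ⟨q, hqlen, hqsup⟩ := hgoodPair u v huX hvX hd
      exact ⟨q, hqlen, fun w hw hwD => hqsup w hw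
        (by obtain ⟨z2, hz2, rfl⟩ := hwD; exact ⟨z2, hz2.1, rfl⟩)⟩
    · have hsum := hbadPair u v hd
      obtain ⟨qu, hqu_len, hqu_sup⟩ := hS u huX
      obtain ⟨qv, hqv_len, hqv_sup⟩ := hS v hvX
      refine ⟨qu.append qv.reverse, ?_, ?_⟩
      · have hc : G.dist x v.1 = G.dist v.1 x := dist_comm
        rw [Walk.length_append, Walk.length_reverse, hqu_len, hqv_len]
        omega
      · intro w hw hwD
        obtain ⟨z2, hz2D, rfl⟩ := hwD
        have hwX : (z2 : V) ∈ Xv := ⟨z2, hz2D.1, rfl⟩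
        rw [Walk.support_append, List.mem_append] at hw
        rcases hw with hw | hw
        · rcases hqu_sup _ hw hwX with h | h
          · exact Or.inl h
          · obtain ⟨z3, hz3W, hval⟩ := h
            exact absurd (Subtype.val_injective hval ▸ hz3W) hz2D.2
        · have h2 : (z2 : V) ∈ qv.support := by
            have := List.mem_of_mem_tail hw
            rwa [Walk.support_reverse, List.mem_reverse] at this
          rcases hqv_sup _ h2 hwX with h | h
          · exact Or.inr h
          · obtain ⟨z3, hz3W, hval⟩ := h
            exact absurd (Subtype.val_injective hval ▸ hz3W) hz2D.2
  -- counting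
  have hle : ∀ Y : Set V, IsMVSet G Y → Y.ncard ≤ mu G := fun Y hY =>
    le_csSup hbddG ⟨Y, hY, rfl⟩
  have h1 := hle _ hWmv
  have h2 := hle _ hDmv
  have hW_card : (Subtype.val '' W).ncard = W.ncard :=
    Set.ncard_image_of_injective _ Subtype.val_injective
  have hD_card : (Subtype.val '' (X \ W)).ncard = (X \ W).ncard :=
    Set.ncard_image_of_injective _ Subtype.val_injective
  have hWX : W ⊆ X := fun z hz => hz.1
  have hsplit : (X \ W).ncard + W.ncard = X.ncard :=
    Set.ncard_diff_add_ncard_of_subset hWX (Set.toFinite X)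
  rw [← hXcard]
  omega
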